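/- Let d ≥ 3 and w_m ≠ 1. The Jacobian of the KGR autonomous system (Λ = 0) at the fixed point CP2 = (√(1 - 2γ(1+w_m)/(1-w_m)), 0), scaled by 2/(d-1), is the diagonal matrix with entries μ1 = 2[(1-w_m) - 2γ(1+w_m)]/[1 - 2γ(d-1)(1+w_m)/(d-2)] and μ2 = 2 - λ_V √((d-2)/(d-1)) √(1 - 2γ(1+w_m)/(1-w_m)), assuming 1 - 2γ(1+w_m)/(1-w_m) > 0 and 1 - 2γ(d-1)(1+w_m)/(d-2) ≠ 0. -/

import Mathlib

theorem stmt_8 (d : ℕ) (hd : 3 ≤ d) (γ wm lV : ℝ) (hw : wm ≠ 1)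
    (hpos : 0 < 1 - 2*γ*(1+wm)/(1-wm))
    (B : ℝ) (hB : B = 1 - 2*γ*((d:ℝ)-1)*(1+wm)/((d:ℝ)-2)) (hB0 : B ≠ 0)
    (G : ℝ × ℝ → ℝ × ℝ)
    (hG : ∀ p : ℝ × ℝ, G p =
      ( ((1 - 2*γ*(d:ℝ)/((d:ℝ)-2))*(1+wm)/B - 2)*p.1
          + 2*lV*Real.sqrt (((d:ℝ)-2)/((d:ℝ)-1))*p.2^2
          + ((1-wm)/B)*p.1^3 - ((1+wm)/B)*p.1*p.2^2 ,
        ((1 - 2*γ*(d:ℝ)/((d:ℝ)-2))*(1+wm)/B)*p.2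
          - lV*Real.sqrt (((d:ℝ)-2)/((d:ℝ)-1))*p.1*p.2
          + ((1-wm)/B)*p.2*p.1^2 - ((1+wm)/B)*p.2^3 ))
    (μ1 μ2 : ℝ)
    (hμ1 : μ1 = 2*((1-wm) - 2*γ*(1+wm))/B)
    (hμ2 : μ2 = 2 - lV * Real.sqrt (((d:ℝ)-2)/((d:ℝ)-1))
      * Real.sqrt (1 - 2*γ*(1+wm)/(1-wm))) :
    ∀ v : ℝ × ℝ,
      fderiv ℝ G (Real.sqrt (1 - 2*γ*(1+wm)/(1-wm)), 0) v
        = (μ1 * v.1, μ2 * v.2) := by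
  intro v
  set c : ℝ := Real.sqrt (((d:ℝ)-2)/((d:ℝ)-1)) with hc
  set s : ℝ := Real.sqrt (1 - 2*γ*(1+wm)/(1-wm)) with hs
  have hs2 : s^2 = 1 - 2*γ*(1+wm)/(1-wm) := Real.sq_sqrt hpos.le
  have hd3 : (3:ℝ) ≤ (d:ℝ) := by exact_mod_cast hd
  have hd2 : ((d:ℝ)-2) ≠ 0 := by nlinarith
  have hw' : (1-wm) ≠ 0 := sub_ne_zero.mpr (Ne.symm hw)
  set A : ℝ := (1 - 2*γ*(d:ℝ)/((d:ℝ)-2))*(1+wm)/B with hA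
  have hq : (1-wm)*s^2 = (1-wm) - 2*γ*(1+wm) := by
    rw [hs2]; field_simp
  have key : A*B + (1-wm)*s^2 = 2*B := by
    have : A*B = (1 - 2*γ*(d:ℝ)/((d:ℝ)-2))*(1+wm) := by
      rw [hA]; field_simp
    rw [this, hq, hB]; field_simp; ring
  set pt : ℝ × ℝ := (s, 0) with hpt
  -- derivative of first coordinate
  have hx : HasFDerivAt (fun p : ℝ × ℝ => p.1) (ContinuousLinearMap.fst ℝ ℝ ℝ) pt :=
    hasFDerivAt_fst
  have hy : HasFDerivAt (fun p : ℝ × ℝ => p.2) (ContinuousLinearMap.snd ℝ ℝ ℝ) pt :=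
    hasFDerivAt_snd
  have h1 := (((hx.const_mul (A-2)).add (((hy.mul hy)).const_mul (2*lV*c))).add
      ((hx.mul (hx.mul hx)).const_mul ((1-wm)/B))).sub
      ((hx.mul (hy.mul hy)).const_mul ((1+wm)/B))
  have h2 := ((((hy.const_mul A)).sub ((hx.mul hy).const_mul (lV*c))).add
      ((hy.mul (hx.mul hx)).const_mul ((1-wm)/B))).sub
      ((hy.mul (hy.mul hy)).const_mul ((1+wm)/B))
  have hGeq : G = fun p : ℝ × ℝ =>
      ((A - 2)*p.1 + (2*lV*c)*(p.2*p.2) + ((1-wm)/B)*(p.1*(p.1*p.1))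
        - ((1+wm)/B)*(p.1*(p.2*p.2)),
       A*p.2 - (lV*c)*(p.1*p.2) + ((1-wm)/B)*(p.2*(p.1*p.1))
        - ((1+wm)/B)*(p.2*(p.2*p.2))) := by
    funext p; rw [hG p]; simp only [hA]; ring_nf
  have hD : HasFDerivAt (fun p : ℝ × ℝ =>
      ((A - 2)*p.1 + (2*lV*c)*(p.2*p.2) + ((1-wm)/B)*(p.1*(p.1*p.1))
        - ((1+wm)/B)*(p.1*(p.2*p.2)),
       A*p.2 - (lV*c)*(p.1*p.2) + ((1-wm)/B)*(p.2*(p.1*p.1))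
        - ((1+wm)/B)*(p.2*(p.2*p.2)))) _ pt := h1.prodMk h2
  rw [← hGeq] at hD
  rw [hD.fderiv]
  have hpt1 : pt.1 = s := rfl
  have hpt2 : pt.2 = (0:ℝ) := rfl
  simp only [ContinuousLinearMap.prod_apply, ContinuousLinearMap.sub_apply,
    ContinuousLinearMap.add_apply, ContinuousLinearMap.smul_apply,
    ContinuousLinearMap.coe_fst', ContinuousLinearMap.coe_snd',
    smul_eq_mul, Pi.mul_apply, hpt1, hpt2, Prod.mk.injEq]
  have key' : A + (1-wm)*s^2/B = 2 := by
    field_simp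
    linear_combination key
  constructor
  · linear_combination v.1*key' - v.1*hμ1 + (2*v.1/B)*hq
  · linear_combination v.2*key' - v.2*hμ2
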